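/- Let K = ℚ[X]/(X³ − 3X − 1) with ring of integers O_K. Then 3 is totally ramified in K: there exists a prime ideal 𝔭 of O_K such that the ideal of O_K generated by 3 equals 𝔭³. -/

import Mathlib

open Polynomial

theorem cubic_irreducible_rat : Irreducible (X ^ 3 - 3 * X - 1 : ℚ[X]) := by
  have h2 : (2 : (ZMod 2)[X]) = 0 := by
    rw [show ((2 : (ZMod 2)[X])) = ((2 : ℕ) : (ZMod 2)[X]) by norm_cast,
      ← Polynomial.C_eq_natCast, show ((2 : ℕ) : ZMod 2) = 0 from rfl, map_zero]
  have hmonicZ : (X ^ 3 - 3 * X - 1 : ℤ[X]).Monic := by monicity!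
  have hmap2 : (X ^ 3 - 3 * X - 1 : ℤ[X]).map (Int.castRingHom (ZMod 2)) =
      X ^ 3 + X + 1 := by
    simp only [Polynomial.map_sub, Polynomial.map_pow, Polynomial.map_mul, Polynomial.map_X,
      Polynomial.map_ofNat, Polynomial.map_one]
    linear_combination (-2 * X - 1) * h2
  have hmonic2 : (X ^ 3 + X + 1 : (ZMod 2)[X]).Monic := by monicity!
  have hdeg2 : (X ^ 3 + X + 1 : (ZMod 2)[X]).natDegree = 3 := by compute_degree!
  have hroots : (X ^ 3 + X + 1 : (ZMod 2)[X]).roots = 0 := by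
    rw [Multiset.eq_zero_iff_forall_notMem]
    intro x hx
    rw [mem_roots hmonic2.ne_zero] at hx
    have hx' : x ^ 3 + x + 1 = 0 := by simpa [IsRoot] using hx
    fin_cases x <;> exact absurd hx' (by decide)
  have hirr2 : Irreducible (X ^ 3 + X + 1 : (ZMod 2)[X]) := by
    rw [irreducible_iff_roots_eq_zero_of_degree_le_three (by rw [hdeg2]; norm_num)
      (by rw [hdeg2])]
    exact hroots
  have hirrZ : Irreducible (X ^ 3 - 3 * X - 1 : ℤ[X]) :=
    hmonicZ.irreducible_of_irreducible_map (Int.castRingHom (ZMod 2)) _ (hmap2 ▸ hirr2)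
  have := (hmonicZ.irreducible_iff_irreducible_map_fraction_map (K := ℚ)).mp hirrZ
  have hmapQ : (X ^ 3 - 3 * X - 1 : ℤ[X]).map (algebraMap ℤ ℚ) = X ^ 3 - 3 * X - 1 := by
    simp [Polynomial.map_sub, Polynomial.map_pow, Polynomial.map_mul, Polynomial.map_X,
      Polynomial.map_ofNat, Polynomial.map_one]
  rwa [hmapQ] at this

instance : Fact (Irreducible (X ^ 3 - 3 * X - 1 : ℚ[X])) := ⟨cubic_irreducible_rat⟩

/-- The cubic number field `K = ℚ[X]/(X³ - 3X - 1)`. -/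
noncomputable abbrev CubicK : Type := AdjoinRoot (X ^ 3 - 3 * X - 1 : ℚ[X])

noncomputable instance : Field CubicK := AdjoinRoot.instField

instance : CharZero CubicK :=
  charZero_of_injective_algebraMap (algebraMap ℚ CubicK).injective

instance : FiniteDimensional ℚ CubicK :=
  Module.Finite.of_basis (AdjoinRoot.powerBasis
    (cubic_irreducible_rat.ne_zero)).basis

instance : NumberField CubicK := ⟨⟩


open NumberField in
noncomputable def θ : CubicK := AdjoinRoot.root _

lemma hθ : θ ^ 3 - 3 * θ - 1 = 0 := by
  have := AdjoinRoot.eval₂_root (X ^ 3 - 3 * X - 1 : ℚ[X])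
  simpa [θ] using this

lemma θ_integral : IsIntegral ℤ θ := by
  refine ⟨X ^ 3 - 3 * X - 1, by monicity!, ?_⟩
  simp only [eval₂_sub, eval₂_mul, eval₂_pow, eval₂_X, eval₂_one, eval₂_ofNat]
  linear_combination hθ

open NumberField in
noncomputable def α : 𝓞 CubicK := ⟨θ, θ_integral⟩

lemma finrank_cubicK : Module.finrank ℚ CubicK = 3 := by
  rw [PowerBasis.finrank (AdjoinRoot.powerBasis cubic_irreducible_rat.ne_zero),
    AdjoinRoot.powerBasis_dim]
  compute_degree!

/-- In the ring of integers of the cubic field `K = ℚ[X]/(X³ - 3X - 1)`, the rational prime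
`3` is totally ramified: there is a prime ideal `𝔭` with `(3) = 𝔭³`. -/
theorem three_totally_ramified_in_cubicK :
    ∃ 𝔭 : Ideal (NumberField.RingOfIntegers CubicK),
      𝔭.IsPrime ∧
      Ideal.span {(3 : NumberField.RingOfIntegers CubicK)} = 𝔭 ^ 3 := by
  set R := NumberField.RingOfIntegers CubicK
  -- the uniformizer π = θ - 1 and the unit u = θ * (2 - θ)
  set π : R := α - 1 with hπ
  set u : R := α * (2 - α) with hu
  set v : R := -1 + α + α ^ 2 with hv
  have key : ∀ x y : R, (x : CubicK) = (y : CubicK) → x = y :=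
    fun x y h => NumberField.RingOfIntegers.ext h
  have hαθ : (α : CubicK) = θ := rfl
  have huv : u * v = 1 := by
    apply key
    push_cast [hu, hv, hαθ, map_ofNat]
    linear_combination (1 - θ) * hθ
  have hunit : IsUnit u := IsUnit.of_mul_eq_one (a := u) v huv
  have hcube : π ^ 3 = 3 * u := by
    apply key
    push_cast [hπ, hu, hαθ, map_ofNat]
    linear_combination hθ
  -- span {3} = span {π} ^ 3
  have hspan : Ideal.span {(3 : R)} = Ideal.span {π} ^ 3 := by
    rw [Ideal.span_singleton_pow]
    apply Ideal.span_singleton_eq_span_singleton.mpr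
    exact ⟨hunit.unit, by rw [IsUnit.unit_spec]; linear_combination -hcube⟩
  refine ⟨Ideal.span {π}, ?_, hspan⟩
  -- primality via absolute norms
  have h27 : Ideal.absNorm (Ideal.span {(3 : R)}) = 27 := by
    rw [Ideal.absNorm_span_singleton]
    have : (3 : R) = algebraMap ℤ R 3 := by norm_num
    rw [this, Algebra.norm_algebraMap_of_basis (Module.Free.chooseBasis ℤ R)]
    rw [← Module.finrank_eq_card_chooseBasisIndex, NumberField.RingOfIntegers.rank,
      finrank_cubicK]
    norm_num
  have habs : Ideal.absNorm (Ideal.span {π}) = 3 := by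
    have h3 : Ideal.absNorm (Ideal.span {π}) ^ 3 = 27 := by
      rw [← map_pow, ← hspan, h27]
    nlinarith [h3, sq_nonneg (Ideal.absNorm (Ideal.span {π}))]
  exact Ideal.isPrime_of_irreducible_absNorm (habs ▸ Nat.prime_three)
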